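/- (Lemma 1) For any two boundary vertices b1, b2 ∈ B, the distance between b1 and b2 in the boundary graph BG equals the distance between b1 and b2 in G: dist_BG(b1,b2) = dist_G(b1,b2). -/

import Mathlib

open scoped ENNReal

namespace SPQ

variable {V : Type*} {ι : Type*}

/-- The length of a walk: the sum of the weights `w` over its consecutive edges. -/
noncomputable def wlen (w : V → V → ℝ≥0∞) {G : SimpleGraph V} {u v : V} (p : G.Walk u v) : ℝ≥0∞ :=
  (p.darts.map fun d => w d.toProd.1 d.toProd.2).sum

/-- The shortest-path distance: infimum of lengths of all walks (⊤ if none exists). -/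
noncomputable def gdist (G : SimpleGraph V) (w : V → V → ℝ≥0∞) (u v : V) : ℝ≥0∞ :=
  ⨅ p : G.Walk u v, wlen w p

/-- The component `C_i`: the subgraph of `G` induced on `P ⁻¹ {i}`
(as a graph on `V`: edges of `G` with both endpoints mapped to `i` by `P`). -/
def comp (G : SimpleGraph V) (P : V → ι) (i : ι) : SimpleGraph V where
  Adj u v := G.Adj u v ∧ P u = i ∧ P v = i
  symm := ⟨fun _ _ h => ⟨h.1.symm, h.2.2, h.2.1⟩⟩
  loopless := ⟨fun u h => G.loopless.irrefl u h.1⟩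

/-- The boundary `B(C_i)`: vertices of component `i` having a `G`-neighbor
in a different component. -/
def bdry (G : SimpleGraph V) (P : V → ι) (i : ι) : Set V :=
  {v | P v = i ∧ ∃ u, G.Adj v u ∧ P u ≠ i}

/-- The set `B` of all boundary vertices. -/
def bdryAll (G : SimpleGraph V) (P : V → ι) : Set V :=
  ⋃ i, bdry G P i

/-- The boundary graph `BG`: distinct boundary vertices `b1, b2` are adjacent
iff `P b1 = P b2` or `G.Adj b1 b2`. -/
def BGraph (G : SimpleGraph V) (P : V → ι) : SimpleGraph V where
  Adj b1 b2 := b1 ≠ b2 ∧ b1 ∈ bdryAll G P ∧ b2 ∈ bdryAll G P ∧ (P b1 = P b2 ∨ G.Adj b1 b2)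
  symm := by
    constructor
    intro u v h
    refine ⟨h.1.symm, h.2.2.1, h.2.1, ?_⟩
    rcases h.2.2.2 with h' | h'
    · exact Or.inl h'.symm
    · exact Or.inr h'.symm
  loopless := ⟨fun u h => h.1 rfl⟩

open Classical in
/-- The edge weight of the boundary graph:
`wt b1 b2 = dist_{C_{P b1}}(b1, b2)` if `P b1 = P b2`, and `w b1 b2` otherwise. -/
noncomputable def wt (G : SimpleGraph V) (P : V → ι) (w : V → V → ℝ≥0∞) (b1 b2 : V) : ℝ≥0∞ :=
  if P b1 = P b2 then gdist (comp G P (P b1)) w b1 b2 else w b1 b2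


section Aux

open SimpleGraph

variable {G : SimpleGraph V} {w : V → V → ℝ≥0∞}

lemma wlen_nil {u : V} : wlen w (Walk.nil : G.Walk u u) = 0 := rfl

lemma wlen_cons {u v x : V} (h : G.Adj u v) (p : G.Walk v x) :
    wlen w (Walk.cons h p) = w u v + wlen w p := by
  simp [wlen]

lemma wlen_append {u v x : V} (p : G.Walk u v) (q : G.Walk v x) :
    wlen w (p.append q) = wlen w p + wlen w q := by
  simp [wlen, Walk.darts_append]

lemma gdist_le_wlen {u v : V} (p : G.Walk u v) : gdist G w u v ≤ wlen w p :=
  iInf_le _ p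

lemma gdist_self_le (u : V) : gdist G w u u ≤ 0 :=
  (gdist_le_wlen Walk.nil).trans_eq wlen_nil

lemma gdist_self (u : V) : gdist G w u u = 0 :=
  le_antisymm (gdist_self_le u) zero_le

lemma gdist_triangle (u x v : V) :
    gdist G w u v ≤ gdist G w u x + gdist G w x v := by
  conv_rhs => rw [gdist, ENNReal.iInf_add]
  refine le_iInf fun p => ?_
  conv_rhs => rw [gdist, ENNReal.add_iInf]
  refine le_iInf fun q => ?_
  exact (gdist_le_wlen (p.append q)).trans_eq (wlen_append p q)

lemma gdist_le_weight {u v : V} (h : G.Adj u v) : gdist G w u v ≤ w u v := by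
  refine (gdist_le_wlen (Walk.cons h Walk.nil)).trans_eq ?_
  rw [wlen_cons, wlen_nil, add_zero]

lemma wlen_mapLe {G' : SimpleGraph V} (hle : G ≤ G') {u v : V} (p : G.Walk u v) :
    wlen w (p.mapLe hle) = wlen w p := by
  induction p with
  | nil => rfl
  | cons h q ih =>
    simp only [Walk.mapLe, Walk.map_cons] at *
    rw [wlen_cons, wlen_cons, ih]
    rfl

lemma gdist_anti {G' : SimpleGraph V} (hle : G ≤ G') (u v : V) :
    gdist G' w u v ≤ gdist G w u v := by
  refine le_iInf fun p => ?_
  exact (gdist_le_wlen (p.mapLe hle)).trans_eq (wlen_mapLe hle p)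

lemma comp_adj (P : V → ι) {i : ι} {u v : V} (h : G.Adj u v) (h1 : P u = i)
    (h2 : P v = i) : (comp G P i).Adj u v :=
  ⟨h, h1, h2⟩

lemma comp_le (P : V → ι) (i : ι) : comp G P i ≤ G := fun _ _ h => h.1

lemma BGraph_adj (P : V → ι) {b1 b2 : V} (h : b1 ≠ b2) (h1 : b1 ∈ bdryAll G P)
    (h2 : b2 ∈ bdryAll G P) (h3 : P b1 = P b2 ∨ G.Adj b1 b2) :
    (BGraph G P).Adj b1 b2 :=
  ⟨h, h1, h2, h3⟩

lemma mem_bdryAll_of (P : V → ι) {u u' : V} (h : G.Adj u u') (hne : P u' ≠ P u) :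
    u ∈ bdryAll G P :=
  Set.mem_iUnion.2 ⟨P u, rfl, u', h, hne⟩

/-- A BG-distance between boundary vertices in the same component is at most the
component distance. -/
lemma dist_BG_le_comp (P : V → ι) {b c : V} (hb : b ∈ bdryAll G P)
    (hc : c ∈ bdryAll G P) (hP : P b = P c) :
    gdist (BGraph G P) (wt G P w) b c ≤ gdist (comp G P (P b)) w b c := by
  rcases eq_or_ne b c with rfl | hne
  · exact le_trans (gdist_self_le _) zero_le
  · refine le_trans (gdist_le_weight (BGraph_adj P hne hb hc (Or.inl hP))) ?_
    rw [wt, if_pos hP]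

/-- Key lemma for the direction `dist_BG ≤ dist_G`. -/
lemma keyA (P : V → ι) {u v : V} (p : G.Walk u v) (hv : v ∈ bdryAll G P)
    {b : V} (hb : b ∈ bdryAll G P) (hPb : P b = P u) :
    gdist (BGraph G P) (wt G P w) b v ≤ gdist (comp G P (P u)) w b u + wlen w p := by
  induction p generalizing b with
  | nil =>
    rw [wlen_nil, add_zero]
    exact hPb ▸ dist_BG_le_comp P hb hv hPb
  | @cons u u' v h q ih =>
    rw [wlen_cons]
    by_cases hPu : P u' = P u
    · have step : gdist (comp G P (P u)) w b u' ≤ gdist (comp G P (P u)) w b u + w u u' := by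
        refine le_trans (gdist_triangle b u u') ?_
        exact add_le_add_right (gdist_le_weight (comp_adj P h rfl hPu)) _
      have hthis := ih hv hb (hPb.trans hPu.symm)
      rw [hPu] at hthis
      calc gdist (BGraph G P) (wt G P w) b v
          ≤ gdist (comp G P (P u)) w b u' + wlen w q := hthis
        _ ≤ gdist (comp G P (P u)) w b u + w u u' + wlen w q := add_le_add_left step _
        _ = gdist (comp G P (P u)) w b u + (w u u' + wlen w q) := add_assoc _ _ _
  -- boundary crossing case
    · have hu : u ∈ bdryAll G P := mem_bdryAll_of P h hPu
      have hu' : u' ∈ bdryAll G P := mem_bdryAll_of P h.symm fun hc => hPu hc.symm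
      have h1 : gdist (BGraph G P) (wt G P w) b u ≤ gdist (comp G P (P u)) w b u :=
        hPb ▸ dist_BG_le_comp P hb hu hPb
      have h2 : gdist (BGraph G P) (wt G P w) u u' ≤ w u u' := by
        refine le_trans (gdist_le_weight (BGraph_adj P h.ne hu hu' (Or.inr h))) ?_
        rw [wt, if_neg fun hc => hPu hc.symm]
      have h3 : gdist (BGraph G P) (wt G P w) u' v ≤ wlen w q := by
        have hthis := ih hv hu' rfl
        rwa [gdist_self, zero_add] at hthis
      calc gdist (BGraph G P) (wt G P w) b v
          ≤ gdist (BGraph G P) (wt G P w) b u + gdist (BGraph G P) (wt G P w) u v :=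
            gdist_triangle _ _ _
        _ ≤ gdist (BGraph G P) (wt G P w) b u +
              (gdist (BGraph G P) (wt G P w) u u' + gdist (BGraph G P) (wt G P w) u' v) :=
            add_le_add_right (gdist_triangle _ _ _) _
        _ ≤ gdist (comp G P (P u)) w b u + (w u u' + wlen w q) :=
            add_le_add h1 (add_le_add h2 h3)

/-- Key lemma for the direction `dist_G ≤ dist_BG`. -/
lemma keyB (P : V → ι) {u v : V} (p : (BGraph G P).Walk u v) :
    gdist G w u v ≤ wlen (wt G P w) p := by
  induction p with
  | nil => exact (gdist_self_le _).trans_eq wlen_nil.symm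
  | @cons u u' v h q ih =>
    rw [wlen_cons]
    have hedge : gdist G w u u' ≤ wt G P w u u' := by
      rw [wt]
      split_ifs with hP
      · exact gdist_anti (comp_le P (P u)) u u'
      · rcases h.2.2.2 with h' | h'
        · exact absurd h' hP
        · exact gdist_le_weight h'
    exact le_trans (gdist_triangle u u' v) (add_le_add hedge ih)

end Aux

/-- Lemma 1: For any two boundary vertices `b1, b2 ∈ B`, the distance
between `b1` and `b2` in the boundary graph `BG` equals the distance between `b1` and
`b2` in `G`. -/
theorem stmt3 {V : Type*} {ι : Type*} [Fintype V] [Fintype ι]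
    (G : SimpleGraph V) (w : V → V → ℝ≥0∞)
    (hsymm : ∀ u v, w u v = w v u) (hfin : ∀ u v, G.Adj u v → w u v < ⊤)
    (P : V → ι) (b1 b2 : V)
    (hb1 : b1 ∈ bdryAll G P) (hb2 : b2 ∈ bdryAll G P) :
    gdist (BGraph G P) (wt G P w) b1 b2 = gdist G w b1 b2 := by
  refine le_antisymm ?_ ?_
  · refine le_iInf fun p => ?_
    have hthis := keyA (w := w) P p hb2 hb1 rfl
    rwa [gdist_self, zero_add] at hthis
  · exact le_iInf fun p => keyB P p

end SPQ
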